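/- arXiv:2001.10485 — 5 statements merged into one kernel-verified Lean document; each statement's English description precedes it below -/
import Mathlib

section
/- Let M be a K×K graph metric matrix with smallest eigenvalue λ_min. Then there exist strictly positive scalars s_1, …, s_K such that, setting S = diag(s_1, …, s_K) and B = S M S^{-1}, all Gershgorin disc left-ends of B are aligned exactly at λ_min, i.e., b_{i,i} − Σ_{j≠i} |b_{i,j}| = λ_min for every i ∈ {1,…,K}. -/
/-- A K×K real matrix is a *graph metric matrix* if it is symmetric positive
definite, has nonpositive off-diagonal entries, strictly positive diagonal
entries, and is irreducible. -/
def IsGraphMetric {K : ℕ} (M : Matrix (Fin K) (Fin K) ℝ) : Prop :=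
  M.PosDef ∧ (∀ i j, i ≠ j → M i j ≤ 0) ∧ (∀ i, 0 < M i i) ∧
    ∀ S : Set (Fin K), S.Nonempty → S ≠ Set.univ →
      ∃ i ∈ S, ∃ j ∉ S, M i j ≠ 0

/-- The set of (real) eigenvalues of a real matrix. -/
def eigenvalueSet {K : ℕ} (M : Matrix (Fin K) (Fin K) ℝ) : Set ℝ :=
  {μ : ℝ | ∃ v : Fin K → ℝ, v ≠ 0 ∧ M.mulVec v = μ • v}

open Matrix

/-- There is a strictly positive eigenvector for the least eigenvalue. -/
lemma exists_pos_eigenvector {K : ℕ} (M : Matrix (Fin K) (Fin K) ℝ)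
    (hM : IsGraphMetric M) (lam : ℝ) (hlam : IsLeast (eigenvalueSet M) lam) :
    ∃ w : Fin K → ℝ, (∀ i, 0 < w i) ∧ M.mulVec w = lam • w := by
  obtain ⟨hpd, hoff, hdiag, hirr⟩ := hM
  have hMH : M.IsHermitian := hpd.1
  set A : Matrix (Fin K) (Fin K) ℝ := M - lam • 1 with hA
  have hAH : A.IsHermitian := hMH.sub (by simp [Matrix.IsHermitian])
  -- A is PSD
  have hApsd : A.PosSemidef := by
    refine hAH.posSemidef_iff_eigenvalues_nonneg.mpr fun i => ?_
    set u : Fin K → ℝ := ⇑(hAH.eigenvectorBasis i) with hu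
    have hu0 : u ≠ 0 := by
      have := hAH.eigenvectorBasis.orthonormal.1 i
      intro h
      rw [show (hAH.eigenvectorBasis i : EuclideanSpace ℝ (Fin K)) = 0 from (WithLp.ofLp_eq_zero 2).mp h] at this
      simp at this
    have heig : A.mulVec u = hAH.eigenvalues i • u := hAH.mulVec_eigenvectorBasis i
    have hMu : M.mulVec u = (hAH.eigenvalues i + lam) • u := by
      have h1 : M.mulVec u - lam • u = hAH.eigenvalues i • u := by
        simpa [hA, Matrix.sub_mulVec, Matrix.smul_mulVec, Matrix.one_mulVec] using heig
      have h2 := congrArg (· + lam • u) h1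
      simpa [sub_add_cancel, add_smul, add_comm] using h2
    have hmem : hAH.eigenvalues i + lam ∈ eigenvalueSet M := ⟨u, hu0, hMu⟩
    have := hlam.2 hmem
    simp only [Pi.zero_apply]
    linarith
  obtain ⟨v, hv0, hveig⟩ := hlam.1
  set w : Fin K → ℝ := fun i => |v i| with hw
  have hw0 : w ≠ 0 := by
    intro h
    apply hv0
    funext i
    have := congrFun h i
    simpa [hw, abs_eq_zero] using this
  have hvAv : v ⬝ᵥ A.mulVec v = 0 := by
    simp only [hA, Matrix.sub_mulVec, Matrix.smul_mulVec, Matrix.one_mulVec, hveig,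
      dotProduct_sub, dotProduct_smul, smul_eq_mul]
    ring
  have hquad : w ⬝ᵥ M.mulVec w ≤ v ⬝ᵥ M.mulVec v := by
    simp only [dotProduct, Matrix.mulVec, Finset.mul_sum]
    refine Finset.sum_le_sum fun i _ => Finset.sum_le_sum fun j _ => ?_
    rcases eq_or_ne i j with rfl | hij
    · apply le_of_eq
      simp only [hw]
      linear_combination M i i * (abs_mul_abs_self (v i))
    · have h1 : M i j ≤ 0 := hoff i j hij
      have h2 : v i * v j ≤ w i * w j := by
        calc v i * v j ≤ |v i * v j| := le_abs_self _
        _ = w i * w j := abs_mul _ _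
      calc w i * (M i j * w j) = M i j * (w i * w j) := by ring
        _ ≤ M i j * (v i * v j) := mul_le_mul_of_nonpos_left h2 h1
        _ = v i * (M i j * v j) := by ring
  have hww : w ⬝ᵥ w = v ⬝ᵥ v := by
    simp [dotProduct, hw, abs_mul_abs_self]
  have hwAw : w ⬝ᵥ A.mulVec w = 0 := by
    have hle : w ⬝ᵥ A.mulVec w ≤ 0 := by
      have e1 : w ⬝ᵥ A.mulVec w = w ⬝ᵥ M.mulVec w - lam * (w ⬝ᵥ w) := by
        simp [hA, Matrix.sub_mulVec, Matrix.smul_mulVec, Matrix.one_mulVec,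
          dotProduct_sub, dotProduct_smul, smul_eq_mul]
      have e2 : v ⬝ᵥ A.mulVec v = v ⬝ᵥ M.mulVec v - lam * (v ⬝ᵥ v) := by
        simp [hA, Matrix.sub_mulVec, Matrix.smul_mulVec, Matrix.one_mulVec,
          dotProduct_sub, dotProduct_smul, smul_eq_mul]
      rw [e1, hww]
      rw [e2] at hvAv
      linarith
    have hge : 0 ≤ w ⬝ᵥ A.mulVec w := by simpa using hApsd.dotProduct_mulVec_nonneg w
    linarith
  have hAw : A.mulVec w = 0 := (hApsd.dotProduct_mulVec_zero_iff w).mp (by simpa using hwAw)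
  have hweig : M.mulVec w = lam • w := by
    have : M.mulVec w - lam • w = 0 := by
      simpa [hA, Matrix.sub_mulVec, Matrix.smul_mulVec, Matrix.one_mulVec] using hAw
    exact sub_eq_zero.mp this
  refine ⟨w, fun i => ?_, hweig⟩
  by_contra hcon
  push_neg at hcon
  have hwi : w i = 0 := le_antisymm hcon (abs_nonneg _)
  set S : Set (Fin K) := {k | w k = 0} with hS
  have hSne : S.Nonempty := ⟨i, hwi⟩
  have hSnu : S ≠ Set.univ := by
    intro h
    apply hw0
    funext k
    have : k ∈ S := h ▸ Set.mem_univ k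
    exact this
  obtain ⟨a, haS, b, hbS, hab⟩ := hirr S hSne hSnu
  have hwa : w a = 0 := haS
  have hwb : 0 < w b := lt_of_le_of_ne (abs_nonneg _) (Ne.symm hbS)
  have hba : b ≠ a := by
    intro h; exact hbS (h ▸ haS)
  have hMab : M a b < 0 := lt_of_le_of_ne (hoff a b (Ne.symm hba)) hab
  have hsum : (M.mulVec w) a = 0 := by
    rw [hweig]; simp [hwa]
  have hlt : (M.mulVec w) a < 0 := by
    have : ∑ j, M a j * w j < 0 := by
      have hterm : ∀ j ∈ Finset.univ, M a j * w j ≤ 0 := by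
        intro j _
        rcases eq_or_ne j a with rfl | hja
        · simp [hwa]
        · exact mul_nonpos_of_nonpos_of_nonneg (hoff a j (Ne.symm hja)) (abs_nonneg _)
      have hsplit := Finset.add_sum_erase Finset.univ (fun j => M a j * w j)
        (Finset.mem_univ b)
      have hrest : ∑ j ∈ Finset.univ.erase b, M a j * w j ≤ 0 :=
        Finset.sum_nonpos fun j hj => hterm j (Finset.mem_univ j)
      have hb : M a b * w b < 0 := mul_neg_of_neg_of_pos hMab hwb
      linarith
    simpa [Matrix.mulVec, dotProduct] using this
  linarith

/-- Theorem 1: for a graph metric matrix `M` with smallest eigenvalue `lam`,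
there exist strictly positive scalars `s` such that all Gershgorin disc
left-ends of `B = S M S⁻¹` (with `S = diag s`) are aligned exactly at `lam`. -/
theorem gershgorin_disc_alignment
    {K : ℕ} (M : Matrix (Fin K) (Fin K) ℝ) (hM : IsGraphMetric M)
    (lam : ℝ) (hlam : IsLeast (eigenvalueSet M) lam) :
    ∃ s : Fin K → ℝ, (∀ i, 0 < s i) ∧
      ∀ i,
        (Matrix.diagonal s * M * Matrix.diagonal fun k => (s k)⁻¹) i i -
            ∑ j ∈ Finset.univ.erase i,
              |(Matrix.diagonal s * M * Matrix.diagonal fun k => (s k)⁻¹) i j| =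
          lam := by
  obtain ⟨w, hwpos, hweig⟩ := exists_pos_eigenvector M hM lam hlam
  refine ⟨fun i => (w i)⁻¹, fun i => inv_pos.mpr (hwpos i), fun i => ?_⟩
  simp only [Matrix.mul_diagonal, Matrix.diagonal_mul, inv_inv]
  have hmv : M i i * w i + ∑ j ∈ Finset.univ.erase i, M i j * w j = lam * w i := by
    have h1 := Finset.add_sum_erase Finset.univ (fun j => M i j * w j) (Finset.mem_univ i)
    have h2 : (M.mulVec w) i = lam * w i := by rw [hweig]; simp
    rw [h1]
    simpa [Matrix.mulVec, dotProduct] using h2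
  have habs : ∀ j ∈ Finset.univ.erase i, |(w i)⁻¹ * M i j * w j| =
      -((w i)⁻¹ * (M i j * w j)) := by
    intro j hj
    have hji : j ≠ i := Finset.ne_of_mem_erase hj
    have h1 : M i j * w j ≤ 0 :=
      mul_nonpos_of_nonpos_of_nonneg (hM.2.1 i j hji.symm) (hwpos j).le
    have h2 : (w i)⁻¹ * M i j * w j = (w i)⁻¹ * (M i j * w j) := by ring
    rw [h2, abs_mul, abs_of_pos (inv_pos.mpr (hwpos i)), abs_of_nonpos h1]
    ring
  rw [Finset.sum_congr rfl habs]
  have hwne : (w i) ≠ 0 := (hwpos i).ne'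
  have hgoal : (w i)⁻¹ * M i i * w i - ∑ j ∈ Finset.univ.erase i, -((w i)⁻¹ * (M i j * w j))
      = (w i)⁻¹ * (lam * w i) := by
    rw [Finset.sum_neg_distrib, ← Finset.mul_sum, ← hmv]
    ring
  rw [hgoal, mul_comm lam, ← mul_assoc, inv_mul_cancel₀ hwne, one_mul]
end

section
/- Let M be a K×K graph metric matrix with smallest eigenvalue λ_min > 0. Then there exist strictly positive scalars s_1, …, s_K such that for every ρ with 0 < ρ ≤ λ_min, the scaled Gershgorin linear constraints hold: m_{i,i} ≥ s_i Σ_{j≠i} |m_{i,j}| / s_j + ρ for every i ∈ {1,…,K}. -/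
/-- Corollary 1: any graph metric matrix `M`, with smallest eigenvalue
`lam > 0`, satisfies the scaled Gershgorin linear constraints
`M i i ≥ s i * ∑_{j≠i} |M i j| / s j + ρ` for suitable strictly positive
scalars `s` and every `ρ` with `0 < ρ ≤ lam`. -/
theorem graph_metric_feasible_scaled_gershgorin
    {K : ℕ} (M : Matrix (Fin K) (Fin K) ℝ) (hM : IsGraphMetric M)
    (lam : ℝ) (hlam : IsLeast (eigenvalueSet M) lam) (hpos : 0 < lam) :
    ∃ s : Fin K → ℝ, (∀ i, 0 < s i) ∧
      ∀ ρ : ℝ, 0 < ρ → ρ ≤ lam →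
        ∀ i, M i i ≥ s i * ∑ j ∈ Finset.univ.erase i, |M i j| / s j + ρ := by
  obtain ⟨hPD, hoff, hdiag, hirr⟩ := hM
  have hH : M.IsHermitian := hPD.1
  have hsym : ∀ i j, M j i = M i j := by
    intro i j
    have := hH.apply i j
    simpa [Matrix.conjTranspose_apply] using this
  set N : Matrix (Fin K) (Fin K) ℝ := M - lam • 1 with hNdef
  have hN : N.IsHermitian := by
    ext i j
    by_cases h : i = j
    · simp [hNdef, Matrix.conjTranspose_apply, Matrix.one_apply, h]
    · simp [hNdef, Matrix.conjTranspose_apply, Matrix.one_apply, h, Ne.symm h, hsym i j]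
  have hMN : ∀ w : Fin K → ℝ, M.mulVec w = N.mulVec w + lam • w := by
    intro w
    simp [hNdef, Matrix.sub_mulVec, Matrix.smul_mulVec, Matrix.one_mulVec]
  have hNpsd : N.PosSemidef := by
    apply hN.posSemidef_iff_eigenvalues_nonneg.mpr
    intro i; show (0:ℝ) ≤ hN.eigenvalues i
    have hev := hN.mulVec_eigenvectorBasis i
    have hw0 : (⇑(hN.eigenvectorBasis i) : Fin K → ℝ) ≠ 0 := by
      intro h
      exact hN.eigenvectorBasis.orthonormal.ne_zero i (by ext j; exact congrFun h j)
    have hmem : hN.eigenvalues i + lam ∈ eigenvalueSet M := by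
      refine ⟨_, hw0, ?_⟩
      rw [hMN, hev, add_smul]
    have := hlam.2 hmem
    linarith
  obtain ⟨v, hv0, hveq⟩ := hlam.1
  set u : Fin K → ℝ := fun i => |v i| with hudef
  have hNv : N.mulVec v = 0 := by
    rw [hNdef, Matrix.sub_mulVec, hveq, Matrix.smul_mulVec, Matrix.one_mulVec, sub_self]
  -- quadratic form of u is ≤ that of v, hence zero
  have hqle : dotProduct u (N.mulVec u) ≤ dotProduct v (N.mulVec v) := by
    simp only [dotProduct, Matrix.mulVec, Finset.mul_sum]
    apply Finset.sum_le_sum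
    intro i _
    apply Finset.sum_le_sum
    intro j _
    by_cases h : i = j
    · subst h
      apply le_of_eq
      simp only [hudef]
      rw [show |v i| * (N i i * |v i|) = N i i * (|v i| * |v i|) from by ring,
        abs_mul_abs_self]
      ring
    · have hNij : N i j = M i j := by
        simp [hNdef, Matrix.one_apply, h]
      have h1 : M i j ≤ 0 := hoff i j h
      have h2 : v i * v j ≤ u i * u j := by
        calc v i * v j ≤ |v i * v j| := le_abs_self _
        _ = u i * u j := by simp [hudef, abs_mul]
      rw [hNij]
      nlinarith
  have hqge : 0 ≤ dotProduct u (N.mulVec u) := by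
    have := hNpsd.dotProduct_mulVec_nonneg u
    simpa using this
  have hq0 : dotProduct (star u) (N.mulVec u) = 0 := by
    have hvz : dotProduct v (N.mulVec v) = 0 := by rw [hNv]; simp
    have : dotProduct u (N.mulVec u) = 0 := le_antisymm (hvz ▸ hqle) hqge
    simpa using this
  have hNu : N.mulVec u = 0 := (hNpsd.dotProduct_mulVec_zero_iff u).mp hq0
  have hMu : M.mulVec u = lam • u := by
    rw [hMN, hNu, zero_add]
  -- u is strictly positive
  have hupos : ∀ i, 0 < u i := by
    by_contra hcon
    push_neg at hcon
    obtain ⟨j0, hj0⟩ := hcon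
    have huj0 : u j0 = 0 := le_antisymm hj0 (abs_nonneg _)
    set S : Set (Fin K) := {i | u i ≠ 0} with hSdef
    have hSne : S.Nonempty := by
      by_contra hemp
      push_neg at hemp
      apply hv0
      funext i
      have : u i = 0 := by
        by_contra h
        have hiS : i ∈ S := h
        rw [hemp] at hiS
        exact hiS
      simpa [hudef, abs_eq_zero] using this
    have hSnu : S ≠ Set.univ := by
      intro h
      have : j0 ∈ S := h ▸ Set.mem_univ j0
      exact this huj0
    obtain ⟨i, hiS, j, hjS, hMij⟩ := hirr S hSne hSnu
    have huj : u j = 0 := by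
      by_contra h
      exact hjS h
    have hui : 0 < u i := lt_of_le_of_ne (abs_nonneg _) (Ne.symm hiS)
    -- row j of M u = lam u
    have hrow : ∑ k, M j k * u k = 0 := by
      have := congrFun hMu j
      simpa [Matrix.mulVec, dotProduct, huj] using this
    have hterms : ∀ k ∈ Finset.univ, k ≠ j → M j k * u k ≤ 0 := by
      intro k _ hk
      exact mul_nonpos_of_nonpos_of_nonneg (hoff j k (Ne.symm hk)) (abs_nonneg _)
    have hij : i ≠ j := fun h => (h ▸ hiS) huj
    have hterm_i : M j i * u i < 0 := by
      have : M j i < 0 := lt_of_le_of_ne (hoff j i (Ne.symm hij)) (by rw [hsym i j]; exact hMij)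
      exact mul_neg_of_neg_of_pos this hui
    have : ∑ k, M j k * u k < 0 := by
      have hsplit : ∑ k, M j k * u k
          = M j i * u i + ∑ k ∈ Finset.univ.erase i, M j k * u k :=
        (Finset.add_sum_erase _ _ (Finset.mem_univ i)).symm
      have hrest : ∑ k ∈ Finset.univ.erase i, M j k * u k ≤ 0 := by
        apply Finset.sum_nonpos
        intro k hk
        by_cases hkj : k = j
        · subst hkj; simp [huj]
        · exact mul_nonpos_of_nonpos_of_nonneg (hoff j k (Ne.symm hkj)) (abs_nonneg _)
      rw [hsplit]; linarith
    linarith [hrow ▸ this]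
  -- define the scalars
  refine ⟨fun i => (u i)⁻¹, fun i => inv_pos.mpr (hupos i), ?_⟩
  intro ρ hρ0 hρlam i
  have hrow : ∑ k, M i k * u k = lam * u i := by
    have := congrFun hMu i
    simpa [Matrix.mulVec, dotProduct] using this
  have hsplit : M i i * u i + ∑ k ∈ Finset.univ.erase i, M i k * u k = lam * u i := by
    rw [Finset.add_sum_erase Finset.univ (fun k => M i k * u k) (Finset.mem_univ i)]
    exact hrow
  have habs : ∑ j ∈ Finset.univ.erase i, |M i j| / (u j)⁻¹
      = -∑ j ∈ Finset.univ.erase i, M i j * u j := by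
    rw [← Finset.sum_neg_distrib]
    apply Finset.sum_congr rfl
    intro j hj
    have hji : j ≠ i := Finset.ne_of_mem_erase hj
    rw [div_inv_eq_mul, abs_of_nonpos (hoff i j (Ne.symm hji))]
    ring
  have hui : 0 < u i := hupos i
  rw [ge_iff_le, habs]
  have : (u i)⁻¹ * -∑ j ∈ Finset.univ.erase i, M i j * u j = M i i - lam := by
    have h1 : ∑ k ∈ Finset.univ.erase i, M i k * u k = lam * u i - M i i * u i := by
      linarith
    rw [h1]
    field_simp
    ring
  rw [this]
  linarith
end

section
/- Let M be a K×K graph metric matrix with smallest eigenvalue λ_min, and let v be an eigenvector of M for λ_min with all entries strictly positive. If the scalars are updated as s_i = 1/v_i for all i, then M satisfies the updated scaled Gershgorin constraints: for every ρ with 0 < ρ ≤ λ_min and every i ∈ {1,…,K}, m_{i,i} ≥ s_i Σ_{j≠i} |m_{i,j}| / s_j + ρ; in particular, a solution M remains feasible for the constraint set after its scalars are updated from its own first eigenvector. -/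
/-- Lemma 2: if the scalars are updated as `s i = 1 / v i` from a strictly
positive first eigenvector `v` of the graph metric matrix `M` (with smallest
eigenvalue `lam`), then `M` satisfies the updated scaled Gershgorin
constraints `M i i ≥ s i * ∑_{j≠i} |M i j| / s j + ρ` for every
`0 < ρ ≤ lam`; i.e. `M` remains feasible after the scalar update. -/
theorem graph_metric_remains_feasible_after_scalar_update
    {K : ℕ} (M : Matrix (Fin K) (Fin K) ℝ) (hM : IsGraphMetric M)
    (lam : ℝ) (hlam : IsLeast (eigenvalueSet M) lam)
    (v : Fin K → ℝ) (hv : ∀ k, 0 < v k) (heig : M.mulVec v = lam • v)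
    (s : Fin K → ℝ) (hs : ∀ i, s i = (v i)⁻¹) :
    ∀ ρ : ℝ, 0 < ρ → ρ ≤ lam →
      ∀ i, M i i ≥ s i * ∑ j ∈ Finset.univ.erase i, |M i j| / s j + ρ := by
  intro ρ hρ hρlam i
  obtain ⟨hpd, hoff, hdiag, hirr⟩ := hM
  have hvi := hv i
  have heq : ∑ j, M i j * v j = lam * v i := by
    have h := congrFun heig i
    simpa [Matrix.mulVec, dotProduct] using h
  have hsplit : (∑ j ∈ Finset.univ.erase i, M i j * v j) + M i i * v i
      = lam * v i := by
    rw [Finset.sum_erase_add _ _ (Finset.mem_univ i)]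
    exact heq
  have hterm : ∀ j ∈ Finset.univ.erase i, |M i j| / s j = -(M i j * v j) := by
    intro j hj
    have hji : j ≠ i := Finset.ne_of_mem_erase hj
    rw [hs, abs_of_nonpos (hoff i j (Ne.symm hji)), div_eq_mul_inv, inv_inv]
    ring
  have hsum : ∑ j ∈ Finset.univ.erase i, |M i j| / s j
      = M i i * v i - lam * v i := by
    rw [Finset.sum_congr rfl hterm, Finset.sum_neg_distrib]
    linarith
  rw [hsum, hs]
  have : (v i)⁻¹ * (M i i * v i - lam * v i) = M i i - lam := by
    field_simp
  rw [this]
  linarith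
end

section
/- Let M be a K×K real symmetric matrix with m_{i,j} ≤ 0 for all i ≠ j, and suppose there exist strictly positive scalars s_1, …, s_K and a real number λ such that all Gershgorin disc left-ends of B = S M S^{-1} (with S = diag(s_1,…,s_K)) are aligned at λ, i.e., b_{i,i} − Σ_{j≠i} |b_{i,j}| = λ for every i. Then λ is exactly the smallest eigenvalue of M: λ = λ_min(M). -/
/-- Exactness claim underlying Theorem 1: if `M` is real symmetric with
nonpositive off-diagonal entries and there exist strictly positive scalars
`s` such that all Gershgorin disc left-ends of `B = S M S⁻¹` are aligned at
`lam`, then `lam` is exactly the smallest eigenvalue of `M`. -/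
theorem aligned_disc_left_ends_give_lambda_min
    {K : ℕ} (hK : 0 < K) (M : Matrix (Fin K) (Fin K) ℝ) (hsym : M.IsSymm)
    (hoff : ∀ i j, i ≠ j → M i j ≤ 0)
    (s : Fin K → ℝ) (hs : ∀ i, 0 < s i) (lam : ℝ)
    (halign : ∀ i,
      (Matrix.diagonal s * M * Matrix.diagonal fun k => (s k)⁻¹) i i -
          ∑ j ∈ Finset.univ.erase i,
            |(Matrix.diagonal s * M * Matrix.diagonal fun k => (s k)⁻¹) i j| =
        lam) :
    IsLeast (eigenvalueSet M) lam := by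
  set B := Matrix.diagonal s * M * Matrix.diagonal fun k => (s k)⁻¹ with hBdef
  have hB : ∀ i j, B i j = s i * M i j * (s j)⁻¹ := by
    intro i j
    simp [hBdef, Matrix.diagonal_mul, Matrix.mul_diagonal]
  have hBoff : ∀ i j, i ≠ j → B i j ≤ 0 := by
    intro i j hij
    rw [hB]
    exact mul_nonpos_of_nonpos_of_nonneg
      (mul_nonpos_of_nonneg_of_nonpos (hs i).le (hoff i j hij))
      (inv_nonneg.mpr (hs j).le)
  -- radius identity: ∑_{j≠i} |B i j| = B i i - lam
  have hrad : ∀ i, ∑ j ∈ Finset.univ.erase i, |B i j| = B i i - lam := by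
    intro i
    have := halign i
    linarith
  -- row sums of B are lam
  have hrow : ∀ i, ∑ j, B i j = lam := by
    intro i
    have habs : ∑ j ∈ Finset.univ.erase i, |B i j| =
        -∑ j ∈ Finset.univ.erase i, B i j := by
      rw [← Finset.sum_neg_distrib]
      apply Finset.sum_congr rfl
      intro j hj
      exact abs_of_nonpos (hBoff i j (Finset.ne_of_mem_erase hj).symm)
    have hsplit : ∑ j ∈ Finset.univ.erase i, B i j + B i i = ∑ j, B i j :=
      Finset.sum_erase_add _ _ (Finset.mem_univ i)
    have := halign i
    rw [habs] at this
    linarith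
  constructor
  · -- lam is an eigenvalue, with eigenvector (s ·)⁻¹
    refine ⟨fun i => (s i)⁻¹, ?_, ?_⟩
    · intro h
      have := congrFun h ⟨0, hK⟩
      exact (inv_pos.mpr (hs ⟨0, hK⟩)).ne' this
    · funext i
      have h := hrow i
      have hsum : ∑ j, B i j = s i * ∑ j, M i j * (s j)⁻¹ := by
        rw [Finset.mul_sum]
        apply Finset.sum_congr rfl
        intro j _
        rw [hB]; ring
      rw [hsum] at h
      have hsi := (hs i).ne'
      show ∑ j, M i j * (s j)⁻¹ = lam * (s i)⁻¹
      field_simp at h ⊢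
      linarith [h]
  · -- lam is a lower bound on eigenvalues
    rintro μ ⟨v, hv, hMv⟩
    set w : Fin K → ℝ := fun i => s i * v i with hwdef
    obtain ⟨i, -, hi⟩ := Finset.exists_max_image Finset.univ (fun j => |w j|)
      ⟨⟨0, hK⟩, Finset.mem_univ _⟩
    have hwi : 0 < |w i| := by
      obtain ⟨j, hj⟩ := Function.ne_iff.mp hv
      have hwj : w j ≠ 0 := mul_ne_zero (hs j).ne' hj
      exact lt_of_lt_of_le (abs_pos.mpr hwj) (hi j (Finset.mem_univ j))
    have key : μ * w i = ∑ j, B i j * w j := by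
      have : ∑ j, B i j * w j = s i * ∑ j, M i j * v j := by
        rw [Finset.mul_sum]
        apply Finset.sum_congr rfl
        intro j _
        rw [hB, hwdef]
        have hsj := (hs j).ne'
        field_simp
      rw [this]
      have := congrFun hMv i
      simp only [Matrix.mulVec, dotProduct, Pi.smul_apply, smul_eq_mul] at this
      rw [this, hwdef]
      ring
    have hsplit : ∑ j ∈ Finset.univ.erase i, B i j * w j + B i i * w i = ∑ j, B i j * w j :=
      Finset.sum_erase_add _ _ (Finset.mem_univ i)
    have heq : (μ - B i i) * w i = ∑ j ∈ Finset.univ.erase i, B i j * w j := by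
      rw [← hsplit] at key
      linarith
    have hle : |μ - B i i| * |w i| ≤ (B i i - lam) * |w i| := by
      calc |μ - B i i| * |w i| = |(μ - B i i) * w i| := (abs_mul _ _).symm
        _ = |∑ j ∈ Finset.univ.erase i, B i j * w j| := by rw [heq]
        _ ≤ ∑ j ∈ Finset.univ.erase i, |B i j * w j| := Finset.abs_sum_le_sum_abs _ _
        _ ≤ ∑ j ∈ Finset.univ.erase i, |B i j| * |w i| := by
            apply Finset.sum_le_sum
            intro j _
            rw [abs_mul]
            exact mul_le_mul_of_nonneg_left (hi j (Finset.mem_univ j)) (abs_nonneg _)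
        _ = (B i i - lam) * |w i| := by rw [← Finset.sum_mul, hrad i]
    have h2 : |μ - B i i| ≤ B i i - lam := le_of_mul_le_mul_right hle hwi
    have := neg_abs_le (μ - B i i)
    linarith
end

section
/- Let M be a K×K graph metric matrix. Then the scaled Gershgorin lower bound on λ_min(M) is tight over all positive diagonal scalings: for every choice of strictly positive scalars s_1,…,s_K, min_i ( b_{i,i} − Σ_{j≠i} |b_{i,j}| ) ≤ λ_min(M), where B = S M S^{-1} and S = diag(s_1,…,s_K); and there exists a choice of strictly positive scalars (namely s_i = 1/v_i for a strictly positive first eigenvector v of M) achieving equality, so the supremum over all strictly positive scalings of the minimal Gershgorin disc left-end of S M S^{-1} equals λ_min(M). -/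
/-- The Gershgorin disc left-end of row `i` of `B = S M S⁻¹`, where
`S = diag s`. -/
noncomputable def gershLeftEnd {K : ℕ} (M : Matrix (Fin K) (Fin K) ℝ)
    (s : Fin K → ℝ) (i : Fin K) : ℝ :=
  (Matrix.diagonal s * M * Matrix.diagonal fun k => (s k)⁻¹) i i -
    ∑ j ∈ Finset.univ.erase i,
      |(Matrix.diagonal s * M * Matrix.diagonal fun k => (s k)⁻¹) i j|

lemma diag_entry {K : ℕ} (M : Matrix (Fin K) (Fin K) ℝ) (a b : Fin K → ℝ) (i j : Fin K) :
    (Matrix.diagonal a * M * Matrix.diagonal b) i j = a i * M i j * b j := by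
  simp [Matrix.mul_diagonal, Matrix.diagonal_mul]

lemma gersh_entry {K : ℕ} (M : Matrix (Fin K) (Fin K) ℝ) (s : Fin K → ℝ) (i j : Fin K) :
    (Matrix.diagonal s * M * Matrix.diagonal fun k => (s k)⁻¹) i j
      = s i * M i j * (s j)⁻¹ := by
  simp [Matrix.mul_diagonal, Matrix.diagonal_mul]

open Matrix

/-- Tightness of the scaled Gershgorin bound: for a graph metric matrix `M`
with smallest eigenvalue `lam`, every positive diagonal scaling yields a
minimal disc left-end at most `lam` (i.e. some row's left-end is `≤ lam`),
and the bound is achieved by the scaling `s i = 1 / v i` for a strictly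
positive first eigenvector `v` of `M`, where all left-ends equal `lam`. -/
theorem scaled_gershgorin_bound_tight
    {K : ℕ} (M : Matrix (Fin K) (Fin K) ℝ) (hM : IsGraphMetric M)
    (lam : ℝ) (hlam : IsLeast (eigenvalueSet M) lam) :
    (∀ s : Fin K → ℝ, (∀ i, 0 < s i) → ∃ i, gershLeftEnd M s i ≤ lam) ∧
    ∃ v : Fin K → ℝ, (∀ k, 0 < v k) ∧ M.mulVec v = lam • v ∧
      ∀ i, gershLeftEnd M (fun k => (v k)⁻¹) i = lam := by
  classical
  obtain ⟨hPD, hoff, hdiag, hirr⟩ := hM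
  obtain ⟨hlam_mem, hlb⟩ := hlam
  obtain ⟨w, hw0, hww⟩ := hlam_mem
  have hMH : M.IsHermitian := hPD.1
  set A : Matrix (Fin K) (Fin K) ℝ := M - lam • 1 with hAdef
  have hAH : A.IsHermitian := hMH.sub (by simp [Matrix.IsHermitian])
  have hAvec : ∀ x : Fin K → ℝ, A *ᵥ x = M *ᵥ x - lam • x := by
    intro x
    simp [hAdef, Matrix.sub_mulVec, Matrix.smul_mulVec, Matrix.one_mulVec]
  have hAoff : ∀ i j : Fin K, i ≠ j → A i j = M i j := by
    intro i j hij
    simp [hAdef, Matrix.one_apply_ne hij]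
  have hApsd : A.PosSemidef := by
    simp only [hAH.posSemidef_iff_eigenvalues_nonneg, Pi.le_def, Pi.zero_apply]
    intro i
    have hb := hAH.mulVec_eigenvectorBasis i
    have hbne : (⇑(hAH.eigenvectorBasis i) : Fin K → ℝ) ≠ 0 := by
      have := hAH.eigenvectorBasis.orthonormal.ne_zero i
      intro h
      exact this (by ext k; exact congrFun h k)
    have hmem : hAH.eigenvalues i + lam ∈ eigenvalueSet M := by
      refine ⟨_, hbne, ?_⟩
      have h2 := hAvec (⇑(hAH.eigenvectorBasis i))
      rw [hb] at h2
      funext k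
      have h3 := congrFun h2 k
      simp only [Pi.sub_apply, Pi.smul_apply, smul_eq_mul] at h3
      show (M *ᵥ ⇑(hAH.eigenvectorBasis i)) k = _
      simp only [Pi.smul_apply, smul_eq_mul]
      linarith
    linarith [hlb hmem]
  have hAw : A *ᵥ w = 0 := by rw [hAvec, hww, sub_self]
  set v : Fin K → ℝ := fun k => |w k| with hvdef
  have hv0 : v ≠ 0 := by
    intro h
    apply hw0
    ext k
    have := congrFun h k
    simpa [hvdef] using this
  -- quadratic form at v is ≤ that at w, which is 0
  have hq : v ⬝ᵥ A *ᵥ v ≤ 0 := by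
    have hform : ∀ x : Fin K → ℝ, x ⬝ᵥ A *ᵥ x = ∑ i, ∑ j, x i * (A i j * x j) := by
      intro x
      simp [dotProduct, Matrix.mulVec, Finset.mul_sum]
    have h0 : w ⬝ᵥ A *ᵥ w = 0 := by rw [hAw, dotProduct_zero]
    rw [← h0, hform, hform]
    refine Finset.sum_le_sum fun i _ => Finset.sum_le_sum fun j _ => ?_
    rcases eq_or_ne i j with rfl | hij
    · refine le_of_eq ?_
      have h5 : v i * v i = w i * w i := by simp [hvdef, abs_mul_abs_self]
      calc v i * (A i i * v i) = A i i * (v i * v i) := by ring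
        _ = A i i * (w i * w i) := by rw [h5]
        _ = w i * (A i i * w i) := by ring
    · have hA0 : A i j ≤ 0 := (hAoff i j hij) ▸ hoff i j hij
      have h1 : w i * w j ≤ v i * v j := by
        calc w i * w j ≤ |w i * w j| := le_abs_self _
        _ = v i * v j := by rw [abs_mul]
      calc v i * (A i j * v j) = A i j * (v i * v j) := by ring
        _ ≤ A i j * (w i * w j) := mul_le_mul_of_nonpos_left h1 hA0
        _ = w i * (A i j * w j) := by ring
  have hq0 : v ⬝ᵥ A *ᵥ v = 0 := le_antisymm hq (by simpa using hApsd.dotProduct_mulVec_nonneg v)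
  have hAv : A *ᵥ v = 0 := by
    have := (hApsd.dotProduct_mulVec_zero_iff v).mp (by simpa using hq0)
    exact this
  have hMv : M *ᵥ v = lam • v := by
    have h := hAvec v
    rw [hAv] at h
    exact sub_eq_zero.mp h.symm
  have hvnn : ∀ k, 0 ≤ v k := fun k => abs_nonneg _
  -- strict positivity via irreducibility
  have hvpos : ∀ k, 0 < v k := by
    by_contra h
    push_neg at h
    obtain ⟨k0, hk0⟩ := h
    have hk0' : v k0 = 0 := le_antisymm hk0 (hvnn k0)
    set S : Set (Fin K) := {i | v i = 0} with hSdef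
    have hSne : S.Nonempty := ⟨k0, hk0'⟩
    have hSnu : S ≠ Set.univ := by
      intro h
      apply hv0
      ext k
      have : k ∈ S := h ▸ Set.mem_univ k
      exact this
    obtain ⟨i, hiS, j0, hj0S, hMij0⟩ := hirr S hSne hSnu
    have hij0 : i ≠ j0 := fun h => hj0S (h ▸ hiS)
    have hrow : ∑ j, M i j * v j = 0 := by
      have := congrFun hMv i
      simpa [Matrix.mulVec, dotProduct, hiS.out, Pi.smul_apply] using this
    have hterm_nonpos : ∀ j ∈ Finset.univ, M i j * v j ≤ 0 := by
      intro j _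
      rcases eq_or_ne i j with rfl | hij
      · simp [hiS.out]
      · exact mul_nonpos_of_nonpos_of_nonneg (hoff i j hij) (hvnn j)
    have := (Finset.sum_eq_zero_iff_of_nonpos hterm_nonpos).mp hrow j0 (Finset.mem_univ _)
    have hvj0 : v j0 ≠ 0 := hj0S
    exact (mul_ne_zero hMij0 hvj0) this
  -- row identity
  have key : ∀ i, ∑ j ∈ Finset.univ.erase i, |M i j| * v j = (M i i - lam) * v i := by
    intro i
    have h1 : ∑ j, M i j * v j = lam * v i := by
      have := congrFun hMv i
      simpa [Matrix.mulVec, dotProduct, Pi.smul_apply, smul_eq_mul] using this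
    rw [← Finset.add_sum_erase _ _ (Finset.mem_univ i)] at h1
    have h2 : ∀ j ∈ Finset.univ.erase i, |M i j| * v j = -(M i j * v j) := by
      intro j hj
      have hij : i ≠ j := (Finset.ne_of_mem_erase hj).symm
      rw [abs_of_nonpos (hoff i j hij), neg_mul]
    rw [Finset.sum_congr rfl h2, Finset.sum_neg_distrib]
    linarith
  constructor
  · -- part 1
    intro s hs
    have hne : Nonempty (Fin K) := ⟨(Function.ne_iff.mp hw0).choose⟩
    obtain ⟨i, -, hi⟩ := Finset.exists_max_image Finset.univ (fun k => s k * v k)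
      Finset.univ_nonempty
    refine ⟨i, ?_⟩
    have hB : gershLeftEnd M s i
        = M i i - ∑ j ∈ Finset.univ.erase i, (s i * (s j)⁻¹) * |M i j| := by
      unfold gershLeftEnd
      simp only [gersh_entry]
      congr 1
      · rw [mul_comm, ← mul_assoc, inv_mul_cancel₀ (hs i).ne', one_mul]
      · refine Finset.sum_congr rfl fun j hj => ?_
        rw [abs_mul, abs_mul, abs_of_pos (hs i), abs_of_pos (inv_pos.mpr (hs j))]
        ring
    rw [hB]
    have hsum : ∑ j ∈ Finset.univ.erase i, (v j * (v i)⁻¹) * |M i j|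
        ≤ ∑ j ∈ Finset.univ.erase i, (s i * (s j)⁻¹) * |M i j| := by
      refine Finset.sum_le_sum fun j hj => ?_
      have h3 : s j * v j ≤ s i * v i := hi j (Finset.mem_univ j)
      have h4 : v j * (v i)⁻¹ ≤ s i * (s j)⁻¹ := by
        rw [← div_eq_mul_inv, ← div_eq_mul_inv, div_le_div_iff₀ (hvpos i) (hs j)]
        nlinarith [hs j, hvpos j, hvpos i, hs i]
      exact mul_le_mul_of_nonneg_right h4 (abs_nonneg _)
    have hsum2 : ∑ j ∈ Finset.univ.erase i, (v j * (v i)⁻¹) * |M i j|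
        = (M i i - lam) := by
      have : ∑ j ∈ Finset.univ.erase i, (v j * (v i)⁻¹) * |M i j|
          = (∑ j ∈ Finset.univ.erase i, |M i j| * v j) * (v i)⁻¹ := by
        rw [Finset.sum_mul]
        exact Finset.sum_congr rfl fun j _ => by ring
      rw [this, key i, mul_assoc, mul_inv_cancel₀ (hvpos i).ne', mul_one]
    linarith
  · -- part 2
    refine ⟨v, hvpos, hMv, fun i => ?_⟩
    have hB : gershLeftEnd M (fun k => (v k)⁻¹) i
        = M i i - ∑ j ∈ Finset.univ.erase i, ((v i)⁻¹ * v j) * |M i j| := by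
      unfold gershLeftEnd
      simp only [diag_entry, inv_inv]
      congr 1
      · rw [mul_comm, ← mul_assoc, mul_inv_cancel₀ (hvpos i).ne', one_mul]
      · refine Finset.sum_congr rfl fun j hj => ?_
        rw [abs_mul, abs_mul, abs_of_pos (inv_pos.mpr (hvpos i)), abs_of_pos (hvpos j)]
        ring
    rw [hB]
    have hsum2 : ∑ j ∈ Finset.univ.erase i, ((v i)⁻¹ * v j) * |M i j| = M i i - lam := by
      have h6 : ∑ j ∈ Finset.univ.erase i, ((v i)⁻¹ * v j) * |M i j|
          = (v i)⁻¹ * ∑ j ∈ Finset.univ.erase i, |M i j| * v j := by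
        rw [Finset.mul_sum]
        exact Finset.sum_congr rfl fun j _ => by ring
      rw [h6, key i, mul_comm, mul_assoc, mul_inv_cancel₀ (hvpos i).ne', mul_one]
    rw [hsum2]
    ring
end
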